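/- Let u : ℝ² → ℝ be a C² function solving L_u(L_u u) = 0 on ℝ², and let A, B, x(c,t) be as above. Then for all c, t ∈ ℝ one has (L_u u)(x(c,t), t) = A(c); that is, L_u u is constant along each characteristic parabola t ↦ (x(c,t), t). -/

import Mathlib

open Real Set

open Real Set

lemma aux_nonneg {E : Type*} [NormedAddCommGroup E] [NormedSpace ℝ E]
    (y y' : ℝ → E) (C : ℝ → ℝ) (hC : Continuous C)
    (hy : ∀ t, HasDerivAt y (y' t) t) (hb : ∀ t, ‖y' t‖ ≤ C t * ‖y t‖)
    (h0 : y 0 = 0) : ∀ t ≥ 0, y t = 0 := by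
  intro t ht
  obtain ⟨M, hM⟩ := (isCompact_Icc (a := (0:ℝ)) (b := t)).exists_bound_of_continuousOn
    hC.continuousOn
  have key : ∀ s ∈ Icc (0:ℝ) t, ‖y s‖ ≤ gronwallBound 0 M 0 (s - 0) := by
    apply norm_le_gronwallBound_of_norm_deriv_right_le
    · exact (Continuous.continuousOn (by
        exact continuous_iff_continuousAt.2 fun s => (hy s).continuousAt))
    · exact fun s _ => (hy s).hasDerivWithinAt
    · simp [h0]
    · intro s hs
      have h1 : C s ≤ M := (le_abs_self _).trans (hM s (Ico_subset_Icc_self hs))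
      have h2 : ‖y' s‖ ≤ C s * ‖y s‖ := hb s
      nlinarith [norm_nonneg (y s)]
  have := key t ⟨ht, le_rfl⟩
  rw [gronwallBound_ε0_δ0] at this
  exact norm_le_zero_iff.1 this

lemma aux_all {E : Type*} [NormedAddCommGroup E] [NormedSpace ℝ E]
    (y y' : ℝ → E) (C : ℝ → ℝ) (hC : Continuous C)
    (hy : ∀ t, HasDerivAt y (y' t) t) (hb : ∀ t, ‖y' t‖ ≤ C t * ‖y t‖)
    (h0 : y 0 = 0) : ∀ t, y t = 0 := by
  intro t
  rcases le_or_gt 0 t with ht | ht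
  · exact aux_nonneg y y' C hC hy hb h0 t ht
  · have := aux_nonneg (fun s => y (-s)) (fun s => -y' (-s)) (fun s => C (-s))
      (hC.comp continuous_neg)
      (fun s => by
        simpa [Function.comp_def] using (hy (-s)).scomp s (hasDerivAt_neg s))
      (fun s => by simpa using hb (-s)) (by simpa using h0) (-t) (by linarith)
    simpa using this

/-- The operator `L_u` acting on `v`:  `(L_u v)(x,t) = ∂v/∂t + u·∂v/∂x`,
with coordinates `(x,t)` on `ℝ × ℝ`. -/
noncomputable def Lop (u v : ℝ × ℝ → ℝ) : ℝ × ℝ → ℝ :=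
  fun p => fderiv ℝ v p (0, 1) + u p * fderiv ℝ v p (1, 0)

theorem stmt1 (u : ℝ × ℝ → ℝ) (hu : ContDiff ℝ 2 u)
    (hpde : ∀ p : ℝ × ℝ, Lop u (Lop u u) p = 0)
    (A B : ℝ → ℝ) (hA : ∀ c, A c = Lop u u (c, 0)) (hB : ∀ c, B c = u (c, 0))
    (X : ℝ → ℝ → ℝ) (hX : ∀ c t, X c t = A c / 2 * t ^ 2 + B c * t + c) :
    ∀ c t : ℝ, Lop u u (X c t, t) = A c := by
  intro c
  set w : ℝ × ℝ → ℝ := Lop u u with hw_def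
  have hDu : ContDiff ℝ 1 (fderiv ℝ u) := hu.fderiv_right (by norm_num)
  have hud : Differentiable ℝ u := hu.differentiable (by norm_num)
  have hw : ContDiff ℝ 1 w := by
    exact ((hDu.clm_apply contDiff_const).add
      ((hu.of_le (by norm_num)).mul (hDu.clm_apply contDiff_const)))
  have hwd : Differentiable ℝ w := hw.differentiable (by norm_num)
  have hwx_cont : Continuous (fun p => fderiv ℝ w p (1, 0)) :=
    (hw.continuous_fderiv (by norm_num)).clm_apply continuous_const
  have hux_cont : Continuous (fun p => fderiv ℝ u p (1, 0)) :=
    (hDu.continuous).clm_apply continuous_const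
  set γ : ℝ → ℝ × ℝ := fun t => (X c t, t) with hγ_def
  have hγ : ∀ t, HasDerivAt γ (A c * t + B c, 1) t := by
    intro t
    have hd : HasDerivAt (fun s : ℝ => A c / 2 * s ^ 2 + B c * s + c) (A c * t + B c) t := by
      have := (((hasDerivAt_pow 2 t).const_mul (A c / 2)).add
        ((hasDerivAt_id t).const_mul (B c))).add_const c
      simp only [id_eq] at this
      exact this.congr_deriv (by push_cast; ring)
    have h1 : HasDerivAt (fun t => X c t) (A c * t + B c) t :=
      hd.congr_of_eventuallyEq (Filter.Eventually.of_forall fun s => (hX c s))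
    exact h1.prodMk (hasDerivAt_id t)
  have hγ_cont : Continuous γ := continuous_iff_continuousAt.2 fun t => (hγ t).continuousAt
  -- key decomposition of a direction vector
  have hsplit : ∀ (p : ℝ × ℝ) (v : ℝ × ℝ → ℝ) (hv : Differentiable ℝ v) (a : ℝ),
      fderiv ℝ v p (a, 1) = fderiv ℝ v p (0,1) + a * fderiv ℝ v p (1,0) := by
    intro p v hv a
    have : (a, (1:ℝ)) = ((0:ℝ),(1:ℝ)) + a • ((1:ℝ),(0:ℝ)) := by
      simp [Prod.ext_iff]
    rw [this, map_add, map_smul]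
    simp only [smul_eq_mul]
  set f : ℝ → ℝ := fun t => u (γ t) with hf_def
  set g : ℝ → ℝ := fun t => w (γ t) with hg_def
  set φ : ℝ → ℝ := fun t => A c * t + B c - f t with hφ_def
  set ψ : ℝ → ℝ := fun t => A c - g t with hψ_def
  have hf' : ∀ t, HasDerivAt f (g t + φ t * fderiv ℝ u (γ t) (1,0)) t := by
    intro t
    have h := (hud (γ t)).hasFDerivAt.comp_hasDerivAt t (hγ t)
    have he : fderiv ℝ u (γ t) (A c * t + B c, 1)
        = g t + φ t * fderiv ℝ u (γ t) (1,0) := by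
      rw [hsplit _ u hud]
      have : g t = fderiv ℝ u (γ t) (0,1) + f t * fderiv ℝ u (γ t) (1,0) := rfl
      rw [this]; simp only [hφ_def]; ring
    rw [he] at h
    exact h
  have hg' : ∀ t, HasDerivAt g (φ t * fderiv ℝ w (γ t) (1,0)) t := by
    intro t
    have h := (hwd (γ t)).hasFDerivAt.comp_hasDerivAt t (hγ t)
    have hpde' : fderiv ℝ w (γ t) (0,1) = - (f t * fderiv ℝ w (γ t) (1,0)) := by
      have := hpde (γ t)
      change fderiv ℝ w (γ t) (0,1) + u (γ t) * fderiv ℝ w (γ t) (1,0) = 0 at this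
      have hft : f t = u (γ t) := rfl
      rw [hft]; linarith
    have he : fderiv ℝ w (γ t) (A c * t + B c, 1) = φ t * fderiv ℝ w (γ t) (1,0) := by
      rw [hsplit _ w hwd, hpde']
      simp only [hφ_def]; ring
    rw [he] at h
    exact h
  set y : ℝ → ℝ × ℝ := fun t => (φ t, ψ t) with hy_def
  set y' : ℝ → ℝ × ℝ := fun t =>
    (ψ t - φ t * fderiv ℝ u (γ t) (1,0), -(φ t * fderiv ℝ w (γ t) (1,0))) with hy'_def
  have hy : ∀ t, HasDerivAt y (y' t) t := by
    intro t
    have hφ' : HasDerivAt φ (ψ t - φ t * fderiv ℝ u (γ t) (1,0)) t := by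
      have h1 : HasDerivAt (fun t => A c * t + B c) (A c) t := by
        simpa using ((hasDerivAt_id t).const_mul (A c)).add_const (B c)
      have := h1.sub (hf' t)
      have he : A c - (g t + φ t * fderiv ℝ u (γ t) (1,0))
          = ψ t - φ t * fderiv ℝ u (γ t) (1,0) := by simp only [hψ_def]; ring
      rw [he] at this
      exact this
    have hψ' : HasDerivAt ψ (-(φ t * fderiv ℝ w (γ t) (1,0))) t := by
      exact ((hasDerivAt_const t (A c)).sub (hg' t)).congr_deriv (by ring)
    exact hφ'.prodMk hψ'
  set C : ℝ → ℝ := fun t => 1 + |fderiv ℝ u (γ t) (1,0)| + |fderiv ℝ w (γ t) (1,0)| with hC_def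
  have hC : Continuous C := by
    apply (continuous_const.add ((hux_cont.comp hγ_cont).abs)).add
      ((hwx_cont.comp hγ_cont).abs)
  have hb : ∀ t, ‖y' t‖ ≤ C t * ‖y t‖ := by
    intro t
    have hny : ‖y t‖ = max |φ t| |ψ t| := by
      simp [hy_def, Prod.norm_def, Real.norm_eq_abs]
    have hny' : ‖y' t‖ = max |ψ t - φ t * fderiv ℝ u (γ t) (1,0)|
        (|φ t| * |fderiv ℝ w (γ t) (1,0)|) := by
      simp [hy'_def, Prod.norm_def, Real.norm_eq_abs, abs_mul]
    rw [hny, hny']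
    have h1 : |φ t| ≤ max |φ t| |ψ t| := le_max_left _ _
    have h2 : |ψ t| ≤ max |φ t| |ψ t| := le_max_right _ _
    apply max_le
    · calc |ψ t - φ t * fderiv ℝ u (γ t) (1,0)|
          ≤ |ψ t| + |φ t| * |fderiv ℝ u (γ t) (1,0)| := by
            simpa [abs_mul] using abs_sub (ψ t) (φ t * fderiv ℝ u (γ t) (1,0))
        _ ≤ C t * max |φ t| |ψ t| := by
            simp only [hC_def]
            nlinarith [abs_nonneg (fderiv ℝ u (γ t) (1,0)), abs_nonneg (fderiv ℝ w (γ t) (1,0)),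
              abs_nonneg (φ t), abs_nonneg (ψ t), le_max_left |φ t| |ψ t|, le_max_right |φ t| |ψ t|]
    · calc |φ t| * |fderiv ℝ w (γ t) (1,0)|
          _ ≤ C t * max |φ t| |ψ t| := by
            simp only [hC_def]
            nlinarith [abs_nonneg (fderiv ℝ u (γ t) (1,0)), abs_nonneg (fderiv ℝ w (γ t) (1,0)),
              abs_nonneg (φ t), abs_nonneg (ψ t), le_max_left |φ t| |ψ t|, le_max_right |φ t| |ψ t|]
  have hX0 : X c 0 = c := by rw [hX]; ring
  have h0 : y 0 = 0 := by
    have hγ0 : γ 0 = (c, 0) := by simp [hγ_def, hX0]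
    have hp : φ 0 = 0 := by simp [hφ_def, hf_def, hγ0, hB c]
    have hq : ψ 0 = 0 := by simp [hψ_def, hg_def, hγ0, hA c, hw_def]
    simp [hy_def, hp, hq, Prod.ext_iff]
  intro t
  have hyt := aux_all y y' C hC hy hb h0 t
  have hψt : ψ t = 0 := by
    have := congrArg Prod.snd hyt
    simpa [hy_def] using this
  have : g t = A c := by simp only [hψ_def] at hψt; linarith
  simpa [hg_def, hγ_def, hw_def] using this
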